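/- Let σ ≥ 0, n, m ≥ 1, let P be any type (the parameter space), let y : Fin m → ℝ be targets, and let ŷ : P → Fin m → ℝ and g : P → Fin m → ℝⁿ be functions (predictions and their weight-gradients). Let μ be the product measure on ℝⁿ whose coordinates are i.i.d. Gaussian with mean 0 and variance σ² (the law of δ ~ N(0, σ² Iₙ)). Define the noisy objective L̃(w) = ∫ (1/m) ∑_{i} (ŷ(w)ᵢ + ⟨g(w)ᵢ, δ⟩ − yᵢ)² dμ(δ) and the regularized objective R(w) = (1/m) ∑_i (ŷ(w)ᵢ − yᵢ)² + σ² (1/m) ∑_i ‖g(w)ᵢ‖². Then L̃(w) = R(w) for every w ∈ P; consequently, w₀ ∈ P minimizes L̃ over P if and only if w₀ minimizes R over P. That is, minimizing the expected loss of the (first-order) quantized network is equivalent to minimizing the loss of the non-quantized network with gradient-norm regularization. -/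

import Mathlib

set_option linter.unusedSectionVars false
set_option linter.unusedVariables false

section QRegAuxSection

open MeasureTheory ProbabilityTheory Real
open scoped NNReal ENNReal RealInnerProductSpace
open scoped NNReal ENNReal RealInnerProductSpace

namespace QRegAux

variable {v : ℝ≥0}

lemma integrable_dirac_real (f : ℝ → ℝ) (a : ℝ) : Integrable f (Measure.dirac a) := by
  have h : f =ᵐ[Measure.dirac a] fun _ => f a := by
    rw [MeasureTheory.ae_dirac_eq]
    exact Filter.eventually_pure.mpr rfl
  exact (integrable_const (f a)).congr h.symm

lemma pdf_eq (x : ℝ) :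
    gaussianPDFReal 0 v x = (Real.sqrt (2 * π * v))⁻¹ * rexp (-((2 * (v : ℝ))⁻¹) * x ^ 2) := by
  have h : -(x - 0) ^ 2 / (2 * (v : ℝ)) = -((2 * (v : ℝ))⁻¹) * x ^ 2 := by
    rw [div_eq_mul_inv]; ring
  rw [gaussianPDFReal, h]

lemma integral_gaussianReal_eq (hv : v ≠ 0) (g : ℝ → ℝ) :
    ∫ x, g x ∂(gaussianReal 0 v) = ∫ x, gaussianPDFReal 0 v x * g x := by
  rw [gaussianReal_of_var_ne_zero _ hv]
  have h : gaussianPDF 0 v = fun x => ((Real.toNNReal (gaussianPDFReal 0 v x) : ℝ≥0) : ℝ≥0∞) :=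
    rfl
  rw [h, integral_withDensity_eq_integral_smul (measurable_gaussianPDFReal 0 v).real_toNNReal g]
  refine integral_congr_ae (Filter.Eventually.of_forall fun x => ?_)
  show (gaussianPDFReal 0 v x).toNNReal • g x = gaussianPDFReal 0 v x * g x
  rw [NNReal.smul_def, smul_eq_mul, Real.coe_toNNReal _ (gaussianPDFReal_nonneg 0 v x)]

lemma integrable_gaussianReal_iff (hv : v ≠ 0) (g : ℝ → ℝ) :
    Integrable g (gaussianReal 0 v) ↔
      Integrable (fun x => g x * gaussianPDFReal 0 v x) volume := by
  rw [gaussianReal_of_var_ne_zero _ hv,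
    integrable_withDensity_iff (measurable_gaussianPDF 0 v)
      (Filter.Eventually.of_forall fun x => ENNReal.ofReal_lt_top)]
  exact integrable_congr (Filter.Eventually.of_forall fun x => by
    simp [gaussianPDF, ENNReal.toReal_ofReal (gaussianPDFReal_nonneg 0 v x)])

lemma coe_pos_of_ne_zero (hv : v ≠ 0) : 0 < (v : ℝ) := by
  exact_mod_cast pos_iff_ne_zero.mpr hv

lemma gaussian_integrable_id (v : ℝ≥0) : Integrable (fun x : ℝ => x) (gaussianReal 0 v) := by
  by_cases hv : v = 0
  · simp only [hv, gaussianReal_zero_var]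
    exact integrable_dirac_real _ _
  · rw [integrable_gaussianReal_iff hv]
    have hb : 0 < (2 * (v : ℝ))⁻¹ := by
      have := coe_pos_of_ne_zero hv; positivity
    have h := (integrable_mul_exp_neg_mul_sq hb).const_mul (Real.sqrt (2 * π * v))⁻¹
    refine h.congr (Filter.Eventually.of_forall fun x => ?_)
    show (Real.sqrt (2 * π * v))⁻¹ * (x * rexp (-(2 * (v : ℝ))⁻¹ * x ^ 2))
      = x * gaussianPDFReal 0 v x
    rw [pdf_eq]; ring

lemma gaussian_integrable_sq (v : ℝ≥0) : Integrable (fun x : ℝ => x ^ 2) (gaussianReal 0 v) := by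
  by_cases hv : v = 0
  · simp only [hv, gaussianReal_zero_var]
    exact integrable_dirac_real _ _
  · rw [integrable_gaussianReal_iff hv]
    have hb : 0 < (2 * (v : ℝ))⁻¹ := by
      have := coe_pos_of_ne_zero hv; positivity
    have h := (integrable_rpow_mul_exp_neg_mul_sq hb (s := 2) (by norm_num)).const_mul
      (Real.sqrt (2 * π * v))⁻¹
    refine h.congr (Filter.Eventually.of_forall fun x => ?_)
    show (Real.sqrt (2 * π * v))⁻¹ * (x ^ (2 : ℝ) * rexp (-(2 * (v : ℝ))⁻¹ * x ^ 2))
      = x ^ 2 * gaussianPDFReal 0 v x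
    rw [pdf_eq, show (x : ℝ) ^ (2 : ℝ) = x ^ 2 by
      rw [show (2 : ℝ) = ((2 : ℕ) : ℝ) by norm_num, Real.rpow_natCast]]
    ring

lemma gaussian_integral_id (v : ℝ≥0) : ∫ x, x ∂(gaussianReal 0 v) = 0 := by
  by_cases hv : v = 0
  · simp [hv]
  · rw [integral_gaussianReal_eq hv]
    have hfun : ∀ x : ℝ, gaussianPDFReal 0 v x * x
        = (Real.sqrt (2 * π * v))⁻¹ * (x * rexp (-((2 * (v : ℝ))⁻¹) * x ^ 2)) := fun x => by
      rw [pdf_eq]; ring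
    simp_rw [hfun]
    rw [integral_const_mul]
    simp_rw [neg_mul]
    have hodd : ∫ x : ℝ, x * rexp (-((2 * (v : ℝ))⁻¹ * x ^ 2)) = 0 := by
      have h1 := integral_neg_eq_self
        (fun x : ℝ => x * rexp (-((2 * (v : ℝ))⁻¹ * x ^ 2))) volume
      simp only [neg_sq, neg_mul, integral_neg] at h1
      linarith
    rw [hodd, mul_zero]

lemma gaussian_integral_sq (v : ℝ≥0) : ∫ x, x ^ 2 ∂(gaussianReal 0 v) = (v : ℝ) := by
  by_cases hv : v = 0
  · simp [hv]
  · have hv' := coe_pos_of_ne_zero hv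
    have h2v : (0 : ℝ) < 2 * (v : ℝ) := by positivity
    have hb : 0 < (2 * (v : ℝ))⁻¹ := by positivity
    rw [integral_gaussianReal_eq hv]
    have hfun : ∀ x : ℝ, gaussianPDFReal 0 v x * x ^ 2
        = (Real.sqrt (2 * π * v))⁻¹ * (x ^ 2 * rexp (-((2 * (v : ℝ))⁻¹) * x ^ 2)) := fun x => by
      rw [pdf_eq]; ring
    simp_rw [hfun]
    rw [integral_const_mul]
    have habs : ∫ x : ℝ, x ^ 2 * rexp (-((2 * (v : ℝ))⁻¹) * x ^ 2)
        = 2 * ∫ x in Set.Ioi (0 : ℝ), x ^ 2 * rexp (-((2 * (v : ℝ))⁻¹) * x ^ 2) := by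
      rw [← integral_comp_abs (f := fun x => x ^ 2 * rexp (-((2 * (v : ℝ))⁻¹) * x ^ 2))]
      refine integral_congr_ae (Filter.Eventually.of_forall fun x => ?_)
      simp [sq_abs]
    have hval := integral_rpow_mul_exp_neg_mul_rpow (p := 2) (q := 2)
      (by norm_num) (by norm_num) hb
    have hrpow : ∀ x : ℝ, x ^ (2 : ℝ) = x ^ 2 := fun x => by
      rw [show (2 : ℝ) = ((2 : ℕ) : ℝ) by norm_num, Real.rpow_natCast]
    simp_rw [hrpow] at hval
    rw [habs, hval]
    have hG : Real.Gamma ((2 + 1) / 2) = (1 / 2) * Real.sqrt π := by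
      rw [show ((2 : ℝ) + 1) / 2 = 1 / 2 + 1 by norm_num,
        Real.Gamma_add_one (by norm_num), Real.Gamma_one_half_eq]
    rw [hG]
    have hbpow : ((2 * (v : ℝ))⁻¹) ^ (-((2 : ℝ) + 1) / 2) = (2 * (v : ℝ)) * Real.sqrt (2 * v) := by
      rw [Real.inv_rpow h2v.le, ← Real.rpow_neg h2v.le, show (-(-((2 : ℝ) + 1) / 2)) = 1 + 1 / 2 by norm_num,
        Real.rpow_add h2v, Real.rpow_one, ← Real.sqrt_eq_rpow]
    rw [hbpow]
    have hs : Real.sqrt (2 * (v : ℝ)) ^ 2 = 2 * (v : ℝ) := Real.sq_sqrt h2v.le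
    have ht : Real.sqrt π ^ 2 = π := Real.sq_sqrt pi_pos.le
    have hsp : (0 : ℝ) < Real.sqrt (2 * (v : ℝ)) := Real.sqrt_pos.mpr h2v
    have htp : (0 : ℝ) < Real.sqrt π := Real.sqrt_pos.mpr pi_pos
    rw [show (2 : ℝ) * π * (v : ℝ) = (2 * (v : ℝ)) * π by ring,
      Real.sqrt_mul h2v.le π, mul_inv]
    field_simp


section Pi

variable {n : ℕ} {ν : Measure ℝ} [IsProbabilityMeasure ν]

lemma pi_integral (f : Fin n → ℝ → ℝ) :
    ∫ δ : Fin n → ℝ, ∏ i, f i (δ i) ∂(Measure.pi fun _ => ν) = ∏ i, ∫ x, f i x ∂ν := by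
  letI : MeasureSpace ℝ := ⟨ν⟩
  haveI : SigmaFinite (volume : Measure ℝ) := inferInstanceAs (SigmaFinite ν)
  exact MeasureTheory.integral_fintype_prod_eq_prod f

lemma pi_integrable (f : Fin n → ℝ → ℝ) (hf : ∀ i, Integrable (f i) ν) :
    Integrable (fun δ : Fin n → ℝ => ∏ i, f i (δ i)) (Measure.pi fun _ => ν) := by
  letI : MeasureSpace ℝ := ⟨ν⟩
  haveI : SigmaFinite (volume : Measure ℝ) := inferInstanceAs (SigmaFinite ν)
  exact MeasureTheory.Integrable.fintype_prod hf

variable (hI1 : Integrable (fun x : ℝ => x) ν) (hI2 : Integrable (fun x : ℝ => x ^ 2) ν)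

lemma pair_eq_prod (j k : Fin n) (δ : Fin n → ℝ) :
    δ j * δ k = ∏ i, ((if i = j then δ i else 1) * (if i = k then δ i else 1)) := by
  rw [Finset.prod_mul_distrib, Fintype.prod_ite_eq' j (fun i => δ i),
    Fintype.prod_ite_eq' k (fun i => δ i)]

lemma single_eq_prod (j : Fin n) (δ : Fin n → ℝ) :
    δ j = ∏ i, (if i = j then δ i else 1) := by
  rw [Fintype.prod_ite_eq' j (fun i => δ i)]

include hI1 hI2 in
lemma factor_integrable (j k i : Fin n) :
    Integrable (fun x : ℝ => (if i = j then x else 1) * (if i = k then x else 1)) ν := by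
  by_cases hj : i = j
  · subst hj
    by_cases hk : i = k
    · subst hk
      simp only [if_pos rfl]
      simpa [pow_two] using hI2
    · simp only [if_pos rfl, if_neg hk, mul_one]
      exact hI1
  · by_cases hk : i = k
    · subst hk
      simp only [if_pos rfl, if_neg hj, one_mul]
      exact hI1
    · simp only [if_neg hj, if_neg hk, mul_one]
      exact integrable_const 1

include hI1 hI2 in
lemma integrable_single (j : Fin n) :
    Integrable (fun δ : Fin n → ℝ => δ j) (Measure.pi fun _ => ν) := by
  have := pi_integrable (fun i => fun x : ℝ => if i = j then x else 1)
    (fun i => by by_cases h : i = j <;> simp only [h, if_true, if_false] <;>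
      first | exact hI1 | exact integrable_const 1)
  refine this.congr (Filter.Eventually.of_forall fun δ => ?_)
  exact (single_eq_prod j δ).symm

include hI1 hI2 in
lemma integrable_pair (j k : Fin n) :
    Integrable (fun δ : Fin n → ℝ => δ j * δ k) (Measure.pi fun _ => ν) := by
  have := pi_integrable
    (fun i => fun x : ℝ => (if i = j then x else 1) * (if i = k then x else 1))
    (factor_integrable hI1 hI2 j k)
  refine this.congr (Filter.Eventually.of_forall fun δ => ?_)
  exact (pair_eq_prod j k δ).symm

lemma integral_single (h1 : ∫ x, x ∂ν = 0) (j : Fin n) :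
    ∫ δ : Fin n → ℝ, δ j ∂(Measure.pi fun _ => ν) = 0 := by
  have he : ∫ δ : Fin n → ℝ, δ j ∂(Measure.pi fun _ => ν)
      = ∫ δ : Fin n → ℝ, ∏ i, (if i = j then δ i else 1) ∂(Measure.pi fun _ => ν) :=
    integral_congr_ae (Filter.Eventually.of_forall fun δ => single_eq_prod j δ)
  rw [he, pi_integral (fun i (x : ℝ) => if i = j then x else 1)]
  refine Finset.prod_eq_zero (Finset.mem_univ j) ?_
  simp [h1]

lemma integral_pair {V : ℝ} (h1 : ∫ x, x ∂ν = 0) (h2 : ∫ x, x ^ 2 ∂ν = V) (j k : Fin n) :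
    ∫ δ : Fin n → ℝ, δ j * δ k ∂(Measure.pi fun _ => ν) = if j = k then V else 0 := by
  have he : ∫ δ : Fin n → ℝ, δ j * δ k ∂(Measure.pi fun _ => ν)
      = ∫ δ : Fin n → ℝ, ∏ i, ((if i = j then δ i else 1) * (if i = k then δ i else 1))
          ∂(Measure.pi fun _ => ν) :=
    integral_congr_ae (Filter.Eventually.of_forall fun δ => pair_eq_prod j k δ)
  rw [he, pi_integral (fun i (x : ℝ) => (if i = j then x else 1) * (if i = k then x else 1))]
  by_cases hjk : j = k
  · subst hjk
    rw [if_pos rfl]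
    rw [Finset.prod_eq_single j (fun i _ hij => by simp [hij]) (by simp)]
    simp only [if_pos rfl]
    rw [← h2]
    refine integral_congr_ae (Filter.Eventually.of_forall fun x => ?_)
    simp [pow_two]
  · rw [if_neg hjk]
    refine Finset.prod_eq_zero (Finset.mem_univ j) ?_
    refine Eq.trans (integral_congr_ae
      (g := fun x : ℝ => x) (Filter.Eventually.of_forall fun x => by simp [hjk])) h1

end Pi


section Key

variable {n : ℕ} {ν : Measure ℝ} [IsProbabilityMeasure ν]
variable (hI1 : Integrable (fun x : ℝ => x) ν) (hI2 : Integrable (fun x : ℝ => x ^ 2) ν)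


lemma expand_sq (a : ℝ) (w : Fin n → ℝ) (δ : Fin n → ℝ) :
    (a + ∑ j, w j * δ j) ^ 2
      = a ^ 2 + (∑ j, (2 * a * w j) * δ j
          + ∑ j, ∑ k, (w j * w k) * (δ j * δ k)) := by
  have hsq : (∑ j, w j * δ j) ^ 2 = ∑ j, ∑ k, (w j * w k) * (δ j * δ k) := by
    rw [sq, Finset.sum_mul_sum]
    exact Finset.sum_congr rfl fun j _ => Finset.sum_congr rfl fun k _ => by ring
  rw [add_sq, hsq, Finset.mul_sum]
  have h2 : ∑ i, 2 * a * (w i * δ i) = ∑ j, (2 * a * w j) * δ j :=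
    Finset.sum_congr rfl fun j _ => by ring
  rw [h2]
  ring

include hI1 hI2 in
lemma key_integrable (a : ℝ) (w : Fin n → ℝ) :
    Integrable (fun δ : Fin n → ℝ => (a + ∑ j, w j * δ j) ^ 2)
      (Measure.pi fun _ => ν) := by
  have h : Integrable (fun δ : Fin n → ℝ =>
      a ^ 2 + (∑ j, (2 * a * w j) * δ j + ∑ j, ∑ k, (w j * w k) * (δ j * δ k)))
      (Measure.pi fun _ => ν) := by
    refine (integrable_const _).add (Integrable.add ?_ ?_)
    · exact integrable_finset_sum _ fun j _ =>
        (integrable_single hI1 hI2 (ν := ν) j).const_mul _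
    · exact integrable_finset_sum _ fun j _ => integrable_finset_sum _ fun k _ =>
        (integrable_pair hI1 hI2 (ν := ν) j k).const_mul _
  exact h.congr (Filter.Eventually.of_forall fun δ => (expand_sq a w δ).symm)

set_option maxHeartbeats 1000000 in
include hI1 hI2 in
lemma key_integral {V : ℝ} (h1 : ∫ x, x ∂ν = 0) (h2 : ∫ x, x ^ 2 ∂ν = V)
    (a : ℝ) (w : Fin n → ℝ) :
    ∫ δ : Fin n → ℝ, (a + ∑ j, w j * δ j) ^ 2 ∂(Measure.pi fun _ => ν)
      = a ^ 2 + V * ∑ j, w j ^ 2 := by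
  have he : ∫ δ : Fin n → ℝ, (a + ∑ j, w j * δ j) ^ 2 ∂(Measure.pi fun _ => ν)
      = ∫ δ : Fin n → ℝ, a ^ 2 + (∑ j, (2 * a * w j) * δ j
          + ∑ j, ∑ k, (w j * w k) * (δ j * δ k)) ∂(Measure.pi fun _ => ν) :=
    integral_congr_ae (Filter.Eventually.of_forall fun δ => expand_sq a w δ)
  rw [he, integral_add (integrable_const _), integral_const]
  · rw [integral_add, integral_finset_sum, integral_finset_sum]
    · have e1 : ∀ j : Fin n, ∫ δ : Fin n → ℝ, (2 * a * w j) * δ j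
          ∂(Measure.pi fun _ => ν) = 0 := fun j => by
        rw [integral_const_mul, integral_single (ν := ν) h1 j, mul_zero]
      have e2 : ∀ j : Fin n, ∫ δ : Fin n → ℝ, ∑ k, (w j * w k) * (δ j * δ k)
          ∂(Measure.pi fun _ => ν) = w j ^ 2 * V := fun j => by
        rw [integral_finset_sum _ fun k _ => (integrable_pair hI1 hI2 (ν := ν) j k).const_mul _]
        have : ∀ k : Fin n, ∫ δ : Fin n → ℝ, (w j * w k) * (δ j * δ k)
            ∂(Measure.pi fun _ => ν) = if j = k then w j ^ 2 * V else 0 := fun k => by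
          rw [integral_const_mul, integral_pair (ν := ν) h1 h2 j k]
          by_cases hjk : j = k
          · subst hjk; simp [pow_two, mul_assoc]
          · simp [hjk]
        simp_rw [this]
        simp
      simp_rw [e1, e2]
      simp only [Finset.sum_const_zero, zero_add, smul_eq_mul]
      have hsum : ∑ j : Fin n, w j ^ 2 * V = V * ∑ j, w j ^ 2 := by
        rw [← Finset.sum_mul, mul_comm]
      rw [hsum]
      simp
    · exact fun j _ => integrable_finset_sum _ fun k _ =>
        (integrable_pair hI1 hI2 (ν := ν) j k).const_mul _
    · exact fun j _ => (integrable_single hI1 hI2 (ν := ν) j).const_mul _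
    · exact integrable_finset_sum _ fun j _ => (integrable_single hI1 hI2 (ν := ν) j).const_mul _
    · exact integrable_finset_sum _ fun j _ => integrable_finset_sum _ fun k _ =>
        (integrable_pair hI1 hI2 (ν := ν) j k).const_mul _
  · refine Integrable.add ?_ ?_
    · exact integrable_finset_sum _ fun j _ => (integrable_single hI1 hI2 (ν := ν) j).const_mul _
    · exact integrable_finset_sum _ fun j _ => integrable_finset_sum _ fun k _ =>
        (integrable_pair hI1 hI2 (ν := ν) j k).const_mul _

end Key


end QRegAux

namespace QRegAux

lemma norm_sq_eq {n : ℕ} (v : EuclideanSpace ℝ (Fin n)) : ‖v‖ ^ 2 = ∑ j, v j ^ 2 := by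
  rw [EuclideanSpace.norm_eq, Real.sq_sqrt (by positivity)]
  simp [Real.norm_eq_abs, sq_abs]

end QRegAux

end QRegAuxSection


open MeasureTheory ProbabilityTheory
open scoped NNReal RealInnerProductSpace

set_option maxHeartbeats 2000000

/-- **Conclusion of Theorem 1 (QReg): equivalence of the two minimization problems.**
With `δ ~ N(0, σ² Iₙ)`, the noisy objective
`L̃(w) = ∫ (1/m) ∑ᵢ (ŷ(w)ᵢ + ⟪g(w)ᵢ, δ⟫ − yᵢ)² dμ(δ)`
coincides with the regularized objective
`R(w) = (1/m) ∑ᵢ (ŷ(w)ᵢ − yᵢ)² + σ² (1/m) ∑ᵢ ‖g(w)ᵢ‖²` for every `w`, and consequently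
`w₀` minimizes `L̃` iff it minimizes `R`:  minimizing the expected loss of the
(first-order) quantized network is equivalent to minimizing the loss of the non-quantized
network with gradient-norm regularization. -/
theorem minimizing_noisy_loss_iff_minimizing_gradNorm_regularized
    (σ : ℝ≥0) (n m : ℕ) (hn : 1 ≤ n) (hm : 1 ≤ m) (P : Type*)
    (y : Fin m → ℝ) (yPred : P → Fin m → ℝ) (g : P → Fin m → EuclideanSpace ℝ (Fin n)) :
    let μ : Measure (EuclideanSpace ℝ (Fin n)) :=
      (Measure.pi fun _ : Fin n => gaussianReal 0 (σ ^ 2)).map (MeasurableEquiv.toLp 2 (Fin n → ℝ))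
    let L : P → ℝ := fun w =>
      ∫ δ, (1 / (m : ℝ)) * ∑ i, (yPred w i + ⟪g w i, δ⟫ - y i) ^ 2 ∂μ
    let R : P → ℝ := fun w =>
      (1 / (m : ℝ)) * ∑ i, (yPred w i - y i) ^ 2
        + (σ : ℝ) ^ 2 * ((1 / (m : ℝ)) * ∑ i, ‖g w i‖ ^ 2)
    (∀ w : P, L w = R w) ∧
      ∀ w₀ : P, (∀ w : P, L w₀ ≤ L w) ↔ (∀ w : P, R w₀ ≤ R w) := by
  intro μ L R
  have hI1 := QRegAux.gaussian_integrable_id (σ ^ 2)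
  have hI2 := QRegAux.gaussian_integrable_sq (σ ^ 2)
  have h1 := QRegAux.gaussian_integral_id (σ ^ 2)
  have h2 : ∫ x, x ^ 2 ∂(gaussianReal 0 (σ ^ 2)) = (σ : ℝ) ^ 2 := by
    rw [QRegAux.gaussian_integral_sq]; push_cast; ring
  have hL : ∀ w, L w = R w := by
    intro w
    have hLw : L w = ∫ δ : Fin n → ℝ,
        (1 / (m : ℝ)) * ∑ i, ((yPred w i - y i) + ∑ j, g w i j * δ j) ^ 2
        ∂(Measure.pi fun _ : Fin n => gaussianReal 0 (σ ^ 2)) := by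
      show (∫ δ : EuclideanSpace ℝ (Fin n),
          (1 / (m : ℝ)) * ∑ i, (yPred w i + ⟪g w i, δ⟫ - y i) ^ 2 ∂μ) = _
      rw [integral_map_equiv]
      refine integral_congr_ae (Filter.Eventually.of_forall fun δ => ?_)
      refine congrArg (fun t : ℝ => (1 / (m : ℝ)) * t) ?_
      refine Finset.sum_congr rfl fun i _ => ?_
      rw [PiLp.inner_apply]
      simp only [RCLike.inner_apply, starRingEnd_apply, star_trivial]
      have hδ : ∀ x, ((MeasurableEquiv.toLp 2 (Fin n → ℝ)) δ).ofLp x = δ x := fun _ => rfl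
      simp only [hδ, mul_comm (δ _)]
      ring
    have hval : ∀ i, ∫ δ : Fin n → ℝ, ((yPred w i - y i) + ∑ j, g w i j * δ j) ^ 2
        ∂(Measure.pi fun _ : Fin n => gaussianReal 0 (σ ^ 2))
        = (yPred w i - y i) ^ 2 + (σ : ℝ) ^ 2 * ∑ j, g w i j ^ 2 := fun i =>
      QRegAux.key_integral hI1 hI2 h1 h2 _ _
    have hnorm : ∀ i, ‖g w i‖ ^ 2 = ∑ j, g w i j ^ 2 := fun i => QRegAux.norm_sq_eq (g w i)
    have hR : R w = (1 / (m : ℝ)) * ∑ i, ((yPred w i - y i) ^ 2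
        + (σ : ℝ) ^ 2 * ∑ j, g w i j ^ 2) := by
      show (1 / (m : ℝ)) * ∑ i, (yPred w i - y i) ^ 2
          + (σ : ℝ) ^ 2 * ((1 / (m : ℝ)) * ∑ i, ‖g w i‖ ^ 2) = _
      simp_rw [hnorm, Finset.sum_add_distrib, mul_add, ← Finset.mul_sum]
      ring
    rw [hLw, integral_const_mul,
      integral_finset_sum _ (fun i _ => QRegAux.key_integrable hI1 hI2 _ _), hR]
    congr 1
    exact Finset.sum_congr rfl fun i _ => hval i
  refine ⟨hL, fun w₀ => ?_⟩
  constructor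
  · intro h w; rw [← hL w₀, ← hL w]; exact h w
  · intro h w; rw [hL w₀, hL w]; exact h w
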